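/- Let r > 0 and η > 0 be real numbers, let (b_k)_{k≥0} be a sequence of positive real numbers, and set M_n = ∑_{k=0}^{n} b_k. If ∑_{n=1}^{∞} n^{r + η + η/r} / M_n^{η/r} = ∞, then ∑_{n=1}^{∞} n^r (∑_{k=n}^{∞} b_k^{−1/r})^η = ∞, where the inner sum ∑_{k=n}^{∞} b_k^{−1/r} and the outer sums are taken in [0,∞]. -/

import Mathlib

open scoped ENNReal

open Finset in
private lemma holder_bound (r η : ℝ) (hr : 0 < r) (hη : 0 < η) (b : ℕ → ℝ)
    (hb : ∀ k, 0 < b k) (n : ℕ) (hn : 1 ≤ n) :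
    (n : ℝ) ^ (r + η + η / r) / (∑ k ∈ range (2 * n + 1), b k) ^ (η / r) ≤
      (n : ℝ) ^ r * (∑ k ∈ range (n + 1), (b (n + k)) ^ (-(1 / r))) ^ η := by
  have hN : (0:ℝ) < n := by exact_mod_cast hn
  have hr0 : r ≠ 0 := hr.ne'
  have hr1 : r + 1 ≠ 0 := by positivity
  set M : ℝ := ∑ k ∈ range (2*n+1), b k with hM
  set B : ℝ := ∑ k ∈ range (n+1), b (n+k) with hB
  set A : ℝ := ∑ k ∈ range (n+1), (b (n+k)) ^ (-(1/r)) with hA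
  have hMpos : 0 < M := Finset.sum_pos (fun k _ => hb k) (by simp)
  have hBpos : 0 < B := Finset.sum_pos (fun k _ => hb _) (by simp)
  have hApos : 0 < A := Finset.sum_pos (fun k _ => Real.rpow_pos_of_pos (hb _) _) (by simp)
  have hBM : B ≤ M := by
    have : M = (∑ k ∈ range n, b k) + B := by
      rw [hM, hB, show 2*n+1 = n + (n+1) by ring, Finset.sum_range_add]
    rw [this]
    exact le_add_of_nonneg_left (Finset.sum_nonneg fun k _ => (hb k).le)
  have hpq : Real.HolderConjugate (r+1) ((r+1)/r) := by
    rw [Real.holderConjugate_iff]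
    constructor
    · linarith
    · field_simp
      ring
  have key : (n:ℝ) + 1 ≤ B ^ (1/(r+1)) * A ^ (r/(r+1)) := by
    have h1 := Real.inner_le_Lp_mul_Lq (range (n+1))
        (fun k => (b (n+k)) ^ (1/(r+1))) (fun k => (b (n+k)) ^ (-(1/(r+1)))) hpq
    have e1 : ∑ k ∈ range (n+1),
        (b (n+k)) ^ (1/(r+1)) * (b (n+k)) ^ (-(1/(r+1))) = (n:ℝ) + 1 := by
      have e0 : ∀ k ∈ range (n+1),
          (b (n+k)) ^ (1/(r+1)) * (b (n+k)) ^ (-(1/(r+1))) = 1 := fun k _ => by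
        rw [← Real.rpow_add (hb _)]; simp
      rw [Finset.sum_congr rfl e0, Finset.sum_const, Finset.card_range, nsmul_eq_mul, mul_one]
      push_cast; ring
    have e2 : ∑ k ∈ range (n+1), |(b (n+k)) ^ (1/(r+1))| ^ (r+1) = B := by
      rw [hB]
      refine Finset.sum_congr rfl fun k _ => ?_
      rw [abs_of_pos (Real.rpow_pos_of_pos (hb _) _), ← Real.rpow_mul (hb _).le,
        one_div_mul_cancel hr1, Real.rpow_one]
    have e3 : ∑ k ∈ range (n+1), |(b (n+k)) ^ (-(1/(r+1)))| ^ ((r+1)/r) = A := by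
      rw [hA]
      refine Finset.sum_congr rfl fun k _ => ?_
      rw [abs_of_pos (Real.rpow_pos_of_pos (hb _) _), ← Real.rpow_mul (hb _).le]
      congr 1
      field_simp
    rw [e1, e2, e3, one_div_div] at h1
    exact h1
  have key2 : (n:ℝ)^((r+1)/r) ≤ M^(1/r) * A := by
    have h2 : ((n:ℝ)+1)^((r+1)/r) ≤ (B ^ (1/(r+1)) * A ^ (r/(r+1)))^((r+1)/r) :=
      Real.rpow_le_rpow (by positivity) key (by positivity)
    rw [Real.mul_rpow (by positivity) (by positivity),
        ← Real.rpow_mul hBpos.le, ← Real.rpow_mul hApos.le,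
        show (1/(r+1)) * ((r+1)/r) = 1/r by field_simp,
        show (r/(r+1)) * ((r+1)/r) = 1 by field_simp, Real.rpow_one] at h2
    calc (n:ℝ)^((r+1)/r) ≤ ((n:ℝ)+1)^((r+1)/r) :=
          Real.rpow_le_rpow hN.le (by linarith) (by positivity)
      _ ≤ B^(1/r) * A := h2
      _ ≤ M^(1/r) * A := by gcongr
  have hA' : (n:ℝ)^((r+1)/r) / M^(1/r) ≤ A := by
    rw [div_le_iff₀ (Real.rpow_pos_of_pos hMpos _)]
    linarith [key2]
  calc (n:ℝ)^(r+η+η/r) / M^(η/r)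
      = (n:ℝ)^r * (((n:ℝ)^((r+1)/r) / M^(1/r)) ^ η) := by
        rw [Real.div_rpow (by positivity) (by positivity),
          ← Real.rpow_mul hN.le, ← Real.rpow_mul hMpos.le,
          show (1/r)*η = η/r by ring,
          show ((r+1)/r)*η = η + η/r by field_simp,
          ← mul_div_assoc, ← Real.rpow_add hN]
        ring_nf
    _ ≤ (n:ℝ)^r * A^η :=
        mul_le_mul_of_nonneg_left (Real.rpow_le_rpow (by positivity) hA' hη.le) (by positivity)

private lemma term_bound (r η : ℝ) (hr : 0 < r) (hη : 0 < η) (b : ℕ → ℝ)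
    (hb : ∀ k, 0 < b k) (n : ℕ) (hn : 1 ≤ n) :
    ENNReal.ofReal ((n : ℝ) ^ (r + η + η / r) /
        (∑ k ∈ Finset.range (2 * n + 1), b k) ^ (η / r)) ≤
      ENNReal.ofReal ((n : ℝ) ^ r) *
        (∑' k : ℕ, ENNReal.ofReal ((b (n + k)) ^ (-(1 / r)))) ^ η := by
  refine le_trans (ENNReal.ofReal_le_ofReal (holder_bound r η hr hη b hb n hn)) ?_
  have hS : ∀ k, (0:ℝ) ≤ (b (n + k)) ^ (-(1 / r)) := fun k => (Real.rpow_pos_of_pos (hb _) _).le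
  have hAnn : (0:ℝ) ≤ ∑ k ∈ Finset.range (n + 1), (b (n + k)) ^ (-(1 / r)) :=
    Finset.sum_nonneg fun k _ => hS k
  rw [ENNReal.ofReal_mul (by positivity)]
  refine mul_le_mul_right ?_ _
  rw [← ENNReal.ofReal_rpow_of_nonneg hAnn hη.le]
  refine ENNReal.rpow_le_rpow ?_ hη.le
  rw [ENNReal.ofReal_sum_of_nonneg (fun k _ => hS k)]
  exact ENNReal.sum_le_tsum _

private lemma H_bound (r η : ℝ) (hr : 0 < r) (hη : 0 < η) (b : ℕ → ℝ)
    (hb : ∀ k, 0 < b k) (n m : ℕ) (hn : 1 ≤ n) (h1 : 2 * n ≤ m) (h2 : (m:ℝ) ≤ 4 * n) :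
    ENNReal.ofReal ((m : ℝ) ^ (r + η + η / r) /
        (∑ k ∈ Finset.range (m + 1), b k) ^ (η / r)) ≤
      ENNReal.ofReal (4 ^ (r + η + η / r)) * (ENNReal.ofReal ((n : ℝ) ^ r) *
        (∑' k : ℕ, ENNReal.ofReal ((b (n + k)) ^ (-(1 / r)))) ^ η) := by
  set p := r + η + η / r with hp
  have hppos : 0 < p := by
    have : 0 < η / r := by positivity
    rw [hp]; linarith
  have hMm : (0:ℝ) < ∑ k ∈ Finset.range (m + 1), b k :=
    Finset.sum_pos (fun k _ => hb k) (by simp)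
  have hM2n : (0:ℝ) < ∑ k ∈ Finset.range (2 * n + 1), b k :=
    Finset.sum_pos (fun k _ => hb k) (by simp)
  have hMle : (∑ k ∈ Finset.range (2 * n + 1), b k) ≤ ∑ k ∈ Finset.range (m + 1), b k :=
    Finset.sum_le_sum_of_subset_of_nonneg
      (Finset.range_subset_range.mpr (by omega)) (fun k _ _ => (hb k).le)
  have hreal : (m : ℝ) ^ p / (∑ k ∈ Finset.range (m + 1), b k) ^ (η / r) ≤
      4 ^ p * ((n : ℝ) ^ p / (∑ k ∈ Finset.range (2 * n + 1), b k) ^ (η / r)) := by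
    rw [← mul_div_assoc, ← Real.mul_rpow (by norm_num) (by positivity)]
    refine div_le_div₀ (by positivity) ?_ (Real.rpow_pos_of_pos hM2n _) ?_
    · exact Real.rpow_le_rpow (by positivity) h2 hppos.le
    · exact Real.rpow_le_rpow hM2n.le hMle (by positivity)
  calc ENNReal.ofReal ((m : ℝ) ^ p / (∑ k ∈ Finset.range (m + 1), b k) ^ (η / r))
      ≤ ENNReal.ofReal (4 ^ p * ((n : ℝ) ^ p /
          (∑ k ∈ Finset.range (2 * n + 1), b k) ^ (η / r))) :=
        ENNReal.ofReal_le_ofReal hreal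
    _ = ENNReal.ofReal (4 ^ p) * ENNReal.ofReal ((n : ℝ) ^ p /
          (∑ k ∈ Finset.range (2 * n + 1), b k) ^ (η / r)) :=
        ENNReal.ofReal_mul (by positivity)
    _ ≤ _ := mul_le_mul_right (term_bound r η hr hη b hb n hn) _

/-- For `r, η > 0` and positive `(b_k)` with partial sums `M_n = ∑_{k=0}^{n} b_k`:
if `∑_{n≥1} n^{r+η+η/r} / M_n^{η/r} = ∞`, then
`∑_{n≥1} n^r (∑_{k=n}^{∞} b_k^{-1/r})^η = ∞`, the sums being taken in `[0,∞]`
(the inner tail sum `∑_{k=n}^{∞}` is written as `∑_{k=0}^{∞} b_{n+k}^{-1/r}`; the terms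
with `n = 0` vanish since `0^s = 0` for `s > 0`). -/
theorem stmt11 (r η : ℝ) (hr : 0 < r) (hη : 0 < η) (b : ℕ → ℝ) (hb : ∀ k, 0 < b k)
    (hdiv : ∑' n : ℕ, ENNReal.ofReal
        ((n : ℝ) ^ (r + η + η / r) / (∑ k ∈ Finset.range (n + 1), b k) ^ (η / r)) = ⊤) :
    ∑' n : ℕ, ENNReal.ofReal ((n : ℝ) ^ r) *
        (∑' k : ℕ, ENNReal.ofReal ((b (n + k)) ^ (-(1 / r)))) ^ η = ⊤ := by
  by_contra hcon
  set T : ℕ → ℝ≥0∞ := fun n => ENNReal.ofReal ((n : ℝ) ^ r) *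
        (∑' k : ℕ, ENNReal.ofReal ((b (n + k)) ^ (-(1 / r)))) ^ η with hT
  set H : ℕ → ℝ≥0∞ := fun n => ENNReal.ofReal
        ((n : ℝ) ^ (r + η + η / r) / (∑ k ∈ Finset.range (n + 1), b k) ^ (η / r)) with hH
  set C : ℝ≥0∞ := ENNReal.ofReal (4 ^ (r + η + η / r)) with hC
  have hppos : 0 < r + η + η / r := by
    have : 0 < η / r := by positivity
    linarith
  have hCne : C ≠ ⊤ := ENNReal.ofReal_ne_top
  have hTne : (∑' n, T n) ≠ ⊤ := hcon
  have hfin : C * ∑' n, T n ≠ ⊤ := ENNReal.mul_ne_top hCne hTne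
  have hshift : ∑' k, T (k+1) ≤ ∑' k, T k := by
    conv_rhs => rw [tsum_eq_zero_add' ENNReal.summable]
    exact self_le_add_left _ _
  have heo : (∑' k, H (2*k)) + (∑' k, H (2*k+1)) = ⊤ := by
    rw [tsum_even_add_odd ENNReal.summable ENNReal.summable]
    exact hdiv
  have heven : (∑' k, H (2*k)) ≤ C * ∑' n, T n := by
    rw [← ENNReal.tsum_mul_left]
    refine ENNReal.tsum_le_tsum fun k => ?_
    rcases Nat.eq_zero_or_pos k with rfl | hk
    · have h0 : H (2*0) = 0 := by
        simp [hH, Real.zero_rpow hppos.ne']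
      rw [h0]
      exact zero_le
    · have hk' : (1:ℝ) ≤ (k:ℝ) := by exact_mod_cast hk
      exact H_bound r η hr hη b hb k (2*k) hk le_rfl (by push_cast; linarith)
  have hodd : (∑' k, H (2*k+1)) ≤ H 1 + C * ∑' n, T n := by
    rw [tsum_eq_zero_add' ENNReal.summable]
    refine add_le_add le_rfl ?_
    calc (∑' k, H (2*(k+1)+1)) ≤ ∑' k, C * T (k+1) :=
          ENNReal.tsum_le_tsum fun k => by
            refine H_bound r η hr hη b hb (k+1) (2*(k+1)+1) (by omega) (by omega) ?_
            have : (0:ℝ) ≤ (k:ℝ) := Nat.cast_nonneg k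
            push_cast; linarith
      _ = C * ∑' k, T (k+1) := ENNReal.tsum_mul_left
      _ ≤ C * ∑' n, T n := mul_le_mul_right hshift _
  have htop : (⊤:ℝ≥0∞) ≤ C * ∑' n, T n + (H 1 + C * ∑' n, T n) := by
    rw [← heo]; exact add_le_add heven hodd
  have : C * ∑' n, T n + (H 1 + C * ∑' n, T n) ≠ ⊤ :=
    ENNReal.add_ne_top.mpr ⟨hfin, ENNReal.add_ne_top.mpr ⟨ENNReal.ofReal_ne_top, hfin⟩⟩
  exact this (top_le_iff.mp htop)
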